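/- Every submodule of a finitely generated free Z[ε]-module (a torsionless Z[ε]-module) is a Gorenstein-projective Z[ε]-module, and conversely every finitely generated Gorenstein-projective Z[ε]-module is torsionless. Thus G-proj Z[ε] = sub(Z[ε]). -/

import Mathlib

/-- A finitely generated `R`-module `M` is Gorenstein-projective if it is the kernel of
`d⁰` in a doubly infinite exact sequence of finitely generated projective `R`-modules
whose `R`-dual is also exact. -/
def IsGorensteinProjective (R : Type) [CommRing R] (M : Type*) [AddCommGroup M]
    [Module R M] : Prop :=
  ∃ (P : ℤ → ModuleCat.{0} R) (d : ∀ i : ℤ, P i →ₗ[R] P (i + 1)),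
    (∀ i, Module.Finite R (P i)) ∧ (∀ i, Module.Projective R (P i)) ∧
    (∀ i, Function.Exact (d i) (d (i + 1))) ∧
    (∀ i, Function.Exact (d (i + 1)).dualMap (d i).dualMap) ∧
    Nonempty (M ≃ₗ[R] LinearMap.ker (d 0))

open Matrix TrivSqZeroExt DualNumber
noncomputable section
abbrev Rε : Type := DualNumber ℤ
variable {m : ℕ}

def Amat (E : Matrix (Fin m) (Fin m) ℤ) : Matrix (Fin m) (Fin m) Rε :=
  E.map TrivSqZeroExt.inl + (ε : Rε) • 1

def Bmat (E : Matrix (Fin m) (Fin m) ℤ) : Matrix (Fin m) (Fin m) Rε :=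
  (ε : Rε) • 1 - E.map TrivSqZeroExt.inl

lemma map_mulVec_fst (E : Matrix (Fin m) (Fin m) ℤ) (v : Fin m → Rε) (i : Fin m) :
    ((E.map TrivSqZeroExt.inl *ᵥ v) i).fst = (E *ᵥ fun j => (v j).fst) i := by
  simp [Matrix.mulVec, dotProduct, TrivSqZeroExt.fst_sum]

lemma map_mulVec_snd (E : Matrix (Fin m) (Fin m) ℤ) (v : Fin m → Rε) (i : Fin m) :
    ((E.map TrivSqZeroExt.inl *ᵥ v) i).snd = (E *ᵥ fun j => (v j).snd) i := by
  simp [Matrix.mulVec, dotProduct, TrivSqZeroExt.snd_sum, TrivSqZeroExt.snd_mul]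

lemma eps_one_mulVec (v : Fin m → Rε) :
    (((ε : Rε) • 1 : Matrix (Fin m) (Fin m) Rε) *ᵥ v) = (ε : Rε) • v := by
  funext i
  simp [Matrix.mulVec, dotProduct, Matrix.one_apply, ite_mul, smul_ite,
    Finset.sum_ite_eq, Matrix.smul_apply]

lemma eps_smul_fst (v : Fin m → Rε) (i : Fin m) : (((ε : Rε) • v) i).fst = 0 := by
  simp

lemma eps_smul_snd (v : Fin m → Rε) (i : Fin m) : (((ε : Rε) • v) i).snd = (v i).fst := by
  simp [TrivSqZeroExt.snd_mul]

lemma Amat_mulVec_fst (E : Matrix (Fin m) (Fin m) ℤ) (v : Fin m → Rε) (i : Fin m) :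
    ((Amat E *ᵥ v) i).fst = (E *ᵥ fun j => (v j).fst) i := by
  rw [Amat, Matrix.add_mulVec, Pi.add_apply, TrivSqZeroExt.fst_add, map_mulVec_fst,
    eps_one_mulVec, eps_smul_fst, add_zero]

lemma Amat_mulVec_snd (E : Matrix (Fin m) (Fin m) ℤ) (v : Fin m → Rε) (i : Fin m) :
    ((Amat E *ᵥ v) i).snd = (v i).fst + (E *ᵥ fun j => (v j).snd) i := by
  rw [Amat, Matrix.add_mulVec, Pi.add_apply, TrivSqZeroExt.snd_add, map_mulVec_snd,
    eps_one_mulVec, eps_smul_snd, add_comm]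

lemma Bmat_mulVec_fst (E : Matrix (Fin m) (Fin m) ℤ) (v : Fin m → Rε) (i : Fin m) :
    ((Bmat E *ᵥ v) i).fst = -(E *ᵥ fun j => (v j).fst) i := by
  rw [Bmat, Matrix.sub_mulVec, Pi.sub_apply, TrivSqZeroExt.fst_sub, map_mulVec_fst,
    eps_one_mulVec, eps_smul_fst, zero_sub]

lemma Bmat_mulVec_snd (E : Matrix (Fin m) (Fin m) ℤ) (v : Fin m → Rε) (i : Fin m) :
    ((Bmat E *ᵥ v) i).snd = (v i).fst - (E *ᵥ fun j => (v j).snd) i := by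
  rw [Bmat, Matrix.sub_mulVec, Pi.sub_apply, TrivSqZeroExt.snd_sub, map_mulVec_snd,
    eps_one_mulVec, eps_smul_snd]

def Alin (E : Matrix (Fin m) (Fin m) ℤ) : (Fin m → Rε) →ₗ[Rε] (Fin m → Rε) :=
  Matrix.toLin' (Amat E)

def Blin (E : Matrix (Fin m) (Fin m) ℤ) : (Fin m → Rε) →ₗ[Rε] (Fin m → Rε) :=
  Matrix.toLin' (Bmat E)

def svec (v : Fin m → Rε) : Fin m → Rε := fun j => TrivSqZeroExt.inl ((v j).snd)

lemma svec_fst (v : Fin m → Rε) : (fun j => ((svec v) j).fst) = fun j => (v j).snd := by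
  funext j; simp [svec]

lemma svec_snd (v : Fin m → Rε) : (fun j => ((svec v) j).snd) = 0 := by
  funext j; simp [svec]

lemma Alin_apply_fst (E : Matrix (Fin m) (Fin m) ℤ) (v : Fin m → Rε) :
    (fun i => ((Alin E v) i).fst) = E *ᵥ fun j => (v j).fst := by
  funext i; rw [Alin, Matrix.toLin'_apply]; exact Amat_mulVec_fst E v i

lemma Alin_apply_snd (E : Matrix (Fin m) (Fin m) ℤ) (v : Fin m → Rε) :
    (fun i => ((Alin E v) i).snd) = (fun j => (v j).fst) + (E *ᵥ fun j => (v j).snd) := by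
  funext i; rw [Alin, Matrix.toLin'_apply]; exact Amat_mulVec_snd E v i

lemma Blin_apply_fst (E : Matrix (Fin m) (Fin m) ℤ) (v : Fin m → Rε) :
    (fun i => ((Blin E v) i).fst) = -(E *ᵥ fun j => (v j).fst) := by
  funext i; rw [Blin, Matrix.toLin'_apply]; exact Bmat_mulVec_fst E v i

lemma Blin_apply_snd (E : Matrix (Fin m) (Fin m) ℤ) (v : Fin m → Rε) :
    (fun i => ((Blin E v) i).snd) = (fun j => (v j).fst) - (E *ᵥ fun j => (v j).snd) := by
  funext i; rw [Blin, Matrix.toLin'_apply]; exact Bmat_mulVec_snd E v i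

lemma exact_Alin_Blin (E : Matrix (Fin m) (Fin m) ℤ) (hE : E * E = 0) :
    Function.Exact (Alin E) (Blin E) := by
  intro v
  constructor
  · intro h
    refine ⟨svec v, ?_⟩
    have hsnd : (fun i => ((Blin E v) i).snd) = 0 := by rw [h]; rfl
    rw [Blin_apply_snd, sub_eq_zero] at hsnd
    funext i
    refine TrivSqZeroExt.ext ?_ ?_
    · have := congrFun (Alin_apply_fst E (svec v)) i
      rw [svec_fst] at this
      rw [this, ← hsnd]
    · have := congrFun (Alin_apply_snd E (svec v)) i
      rw [svec_fst, svec_snd, Matrix.mulVec_zero] at this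
      simpa [svec] using this
  · rintro ⟨w, rfl⟩
    funext i
    refine TrivSqZeroExt.ext ?_ ?_
    · have := congrFun (Blin_apply_fst E (Alin E w)) i
      rw [Alin_apply_fst, Matrix.mulVec_mulVec, hE, Matrix.zero_mulVec] at this
      simpa using this
    · have := congrFun (Blin_apply_snd E (Alin E w)) i
      rw [Alin_apply_fst, Alin_apply_snd, Matrix.mulVec_add, Matrix.mulVec_mulVec, hE,
        Matrix.zero_mulVec, add_zero, sub_self] at this
      simpa using this

lemma exact_Blin_Alin (E : Matrix (Fin m) (Fin m) ℤ) (hE : E * E = 0) :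
    Function.Exact (Blin E) (Alin E) := by
  intro v
  constructor
  · intro h
    refine ⟨svec v, ?_⟩
    have hsnd : (fun i => ((Alin E v) i).snd) = 0 := by rw [h]; rfl
    rw [Alin_apply_snd] at hsnd
    have hsnd' : (fun j => (v j).fst) = -(E *ᵥ fun j => (v j).snd) :=
      eq_neg_of_add_eq_zero_left hsnd
    funext i
    refine TrivSqZeroExt.ext ?_ ?_
    · have := congrFun (Blin_apply_fst E (svec v)) i
      rw [svec_fst] at this
      rw [this, congrFun hsnd' i]
    · have := congrFun (Blin_apply_snd E (svec v)) i
      rw [svec_fst, svec_snd, Matrix.mulVec_zero] at this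
      simpa [svec] using this
  · rintro ⟨w, rfl⟩
    funext i
    refine TrivSqZeroExt.ext ?_ ?_
    · have := congrFun (Alin_apply_fst E (Blin E w)) i
      rw [Blin_apply_fst, Matrix.mulVec_neg, Matrix.mulVec_mulVec, hE, Matrix.zero_mulVec] at this
      simpa using this
    · have := congrFun (Alin_apply_snd E (Blin E w)) i
      rw [Blin_apply_fst, Blin_apply_snd, Matrix.mulVec_sub, Matrix.mulVec_mulVec, hE,
        Matrix.zero_mulVec, sub_zero] at this
      simpa using this

def dIso : Module.Dual Rε (Fin m → Rε) ≃ₗ[Rε] (Fin m → Rε) :=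
  (Pi.basisFun Rε (Fin m)).dualBasis.equivFun

lemma dIso_toLin' (N : Matrix (Fin m) (Fin m) Rε) (φ : Module.Dual Rε (Fin m → Rε)) :
    dIso ((Matrix.toLin' N).dualMap φ) = Matrix.toLin' Nᵀ (dIso φ) := by
  funext i
  rw [dIso, Module.Basis.dualBasis_equivFun, LinearMap.dualMap_apply, Pi.basisFun_apply,
    Matrix.toLin'_apply, Matrix.mulVec_single, Matrix.toLin'_apply]
  have hcol : (fun j => N j i * 1) = ∑ j : Fin m, (N j i) • (Pi.single j 1 : Fin m → Rε) := by
    funext k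
    simp [Pi.single_apply, Finset.sum_ite_eq', mul_comm]
  rw [show MulOpposite.op (1 : Rε) • N.col i = fun j => N j i * 1 from by funext j; simp]
  rw [hcol, map_sum]
  rw [Matrix.mulVec, dotProduct]
  refine Finset.sum_congr rfl fun j _ => ?_
  rw [_root_.map_smul, Matrix.transpose_apply, Module.Basis.dualBasis_equivFun, Pi.basisFun_apply,
    smul_eq_mul]

lemma transpose_Amat (E : Matrix (Fin m) (Fin m) ℤ) : (Amat E)ᵀ = Amat Eᵀ := by
  rw [Amat, Amat, Matrix.transpose_add, Matrix.transpose_smul, Matrix.transpose_one,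
    Matrix.transpose_map]

lemma transpose_Bmat (E : Matrix (Fin m) (Fin m) ℤ) : (Bmat E)ᵀ = Bmat Eᵀ := by
  rw [Bmat, Bmat, Matrix.transpose_sub, Matrix.transpose_smul, Matrix.transpose_one,
    Matrix.transpose_map]

lemma exact_of_ladder {V W : Type*} [AddCommGroup V] [AddCommGroup W] [Module Rε V]
    [Module Rε W] (e : V ≃ₗ[Rε] W) {f g : V →ₗ[Rε] V} {f' g' : W →ₗ[Rε] W}
    (hf : ∀ x, e (f x) = f' (e x)) (hg : ∀ x, e (g x) = g' (e x))
    (h : Function.Exact f' g') : Function.Exact f g := by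
  intro v
  constructor
  · intro hv
    have : g' (e v) = 0 := by rw [← hg, hv, map_zero]
    obtain ⟨w, hw⟩ := (h (e v)).mp this
    exact ⟨e.symm w, e.injective (by rw [hf, e.apply_symm_apply, hw])⟩
  · rintro ⟨u, rfl⟩
    apply e.injective
    rw [hg, hf, map_zero]
    exact (h (f' (e u))).mpr ⟨e u, rfl⟩

lemma exact_dual_AB (E : Matrix (Fin m) (Fin m) ℤ) (hE : E * E = 0) :
    Function.Exact (Alin E).dualMap (Blin E).dualMap := by
  have hE' : Eᵀ * Eᵀ = 0 := by rw [← Matrix.transpose_mul, hE, Matrix.transpose_zero]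
  refine exact_of_ladder dIso (f' := Alin Eᵀ) (g' := Blin Eᵀ) ?_ ?_
    (exact_Alin_Blin Eᵀ hE')
  · intro φ; rw [Alin, Alin, dIso_toLin', transpose_Amat]
  · intro φ; rw [Blin, Blin, dIso_toLin', transpose_Bmat]

lemma exact_dual_BA (E : Matrix (Fin m) (Fin m) ℤ) (hE : E * E = 0) :
    Function.Exact (Blin E).dualMap (Alin E).dualMap := by
  have hE' : Eᵀ * Eᵀ = 0 := by rw [← Matrix.transpose_mul, hE, Matrix.transpose_zero]
  refine exact_of_ladder dIso (f' := Blin Eᵀ) (g' := Alin Eᵀ) ?_ ?_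
    (exact_Blin_Alin Eᵀ hE')
  · intro φ; rw [Blin, Blin, dIso_toLin', transpose_Bmat]
  · intro φ; rw [Alin, Alin, dIso_toLin', transpose_Amat]

section ModulePart
variable (M : Type) [AddCommGroup M] [Module Rε M]

lemma smul_decomp (r : Rε) (x : M) :
    r • x = r.fst • x + r.snd • ((ε : Rε) • x) := by
  conv_lhs => rw [← TrivSqZeroExt.inl_fst_add_inr_snd_eq r]
  rw [add_smul, DualNumber.inr_eq_smul_eps, smul_assoc]
  congr 1
  rw [← TrivSqZeroExt.algebraMap_eq_inl, algebraMap_smul]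

lemma eps_eps_smul (x : M) : (ε : Rε) • ((ε : Rε) • x) = 0 := by
  rw [smul_smul, DualNumber.eps_mul_eps]
  exact zero_smul Rε x

def epsL : M →ₗ[ℤ] M where
  toFun x := (ε : Rε) • x
  map_add' x y := smul_add (ε : Rε) x y
  map_smul' n x := by
    simp only [RingHom.id_apply]
    rw [← Int.cast_smul_eq_zsmul Rε, ← Int.cast_smul_eq_zsmul Rε, smul_smul, smul_smul,
      mul_comm]

@[simp] lemma epsL_apply (x : M) : epsL M x = (ε : Rε) • x := rfl

variable {M} (b : Module.Basis (Fin m) ℤ M)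

def Emat : Matrix (Fin m) (Fin m) ℤ := LinearMap.toMatrix b b (epsL M)

lemma Emat_sq : Emat b * Emat b = 0 := by
  rw [Emat, ← LinearMap.toMatrix_comp b b b]
  have h : (epsL M).comp (epsL M) = 0 := by
    ext x
    show (ε : Rε) • ((ε : Rε) • x) = 0
    exact eps_eps_smul M x
  rw [h, map_zero]

lemma Emat_mulVec (x : M) :
    Emat b *ᵥ ⇑(b.repr x) = ⇑(b.repr ((ε : Rε) • x)) := by
  simpa [Emat] using LinearMap.toMatrix_mulVec_repr b b (epsL M) x

lemma eps_mul_r (r : Rε) : (ε : Rε) * r = r.fst • (ε : Rε) := by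
  refine TrivSqZeroExt.ext ?_ ?_ <;>
    simp [TrivSqZeroExt.snd_mul]

def phiFun (x : M) : Fin m → Rε := fun i =>
  TrivSqZeroExt.inl (b.repr ((ε : Rε) • x) i) + TrivSqZeroExt.inr (b.repr x i)

@[simp] lemma phiFun_fst (x : M) (i : Fin m) :
    (phiFun b x i).fst = b.repr ((ε : Rε) • x) i := by
  simp [phiFun]

@[simp] lemma phiFun_snd (x : M) (i : Fin m) :
    (phiFun b x i).snd = b.repr x i := by
  simp [phiFun]

lemma key_eps_smul (r : Rε) (x : M) :
    (ε : Rε) • (r • x) = r.fst • ((ε : Rε) • x) := by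
  rw [smul_smul, eps_mul_r, smul_assoc]

def phi : M →ₗ[Rε] (Fin m → Rε) where
  toFun x := phiFun b x
  map_add' x y := by
    funext i
    refine TrivSqZeroExt.ext ?_ ?_
    · rw [Pi.add_apply, TrivSqZeroExt.fst_add, phiFun_fst, phiFun_fst, phiFun_fst,
        smul_add (ε : Rε) x y, map_add, Finsupp.add_apply]
    · rw [Pi.add_apply, TrivSqZeroExt.snd_add, phiFun_snd, phiFun_snd, phiFun_snd,
        map_add, Finsupp.add_apply]
  map_smul' r x := by
    funext i
    simp only [RingHom.id_apply]
    rw [Pi.smul_apply r (phiFun b x) i, smul_eq_mul]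
    refine TrivSqZeroExt.ext ?_ ?_
    · rw [TrivSqZeroExt.fst_mul, phiFun_fst, phiFun_fst, key_eps_smul, _root_.map_smul,
        Finsupp.smul_apply, smul_eq_mul]
    · rw [TrivSqZeroExt.snd_mul, phiFun_snd, phiFun_fst, phiFun_snd]
      rw [smul_decomp M r x, map_add, Finsupp.add_apply, _root_.map_smul, _root_.map_smul,
        Finsupp.smul_apply, Finsupp.smul_apply]
      simp [mul_comm]

@[simp] lemma phi_apply (x : M) : phi b x = phiFun b x := rfl

lemma phiFun_fst_eq (x : M) :
    (fun j => (phiFun b x j).fst) = ⇑(b.repr ((ε : Rε) • x)) := by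
  funext j; rw [phiFun_fst]

lemma phiFun_snd_eq (x : M) :
    (fun j => (phiFun b x j).snd) = ⇑(b.repr x) := by
  funext j; rw [phiFun_snd]

lemma phi_mem_ker (x : M) : Blin (Emat b) (phi b x) = 0 := by
  funext i
  have hf := congrFun (Blin_apply_fst (Emat b) (phiFun b x)) i
  have hs := congrFun (Blin_apply_snd (Emat b) (phiFun b x)) i
  rw [phiFun_fst_eq, Emat_mulVec, eps_eps_smul, map_zero] at hf
  rw [phiFun_fst_eq, phiFun_snd_eq, Emat_mulVec] at hs
  refine TrivSqZeroExt.ext ?_ ?_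
  · simpa using hf
  · simpa using hs

lemma phi_injective : Function.Injective (phi b) := by
  intro x y h
  apply b.repr.injective
  ext i
  have := congrArg (fun v => ((v : Fin m → Rε) i).snd) h
  simpa using this

lemma phi_surj_ker (v : Fin m → Rε) (hv : Blin (Emat b) v = 0) : ∃ x, phi b x = v := by
  set x := b.repr.symm (Finsupp.equivFunOnFinite.symm fun j => (v j).snd) with hx
  have hrepr : ⇑(b.repr x) = fun j => (v j).snd := by
    rw [hx, LinearEquiv.apply_symm_apply]
    rfl
  refine ⟨x, ?_⟩
  funext i
  have hs := congrFun (Blin_apply_snd (Emat b) v) i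
  rw [hv] at hs
  simp only [Pi.zero_apply, TrivSqZeroExt.snd_zero, Pi.sub_apply] at hs
  have hfst : (v i).fst = (Emat b *ᵥ fun j => (v j).snd) i := eq_of_sub_eq_zero hs.symm
  refine TrivSqZeroExt.ext ?_ ?_
  · rw [phi_apply, phiFun_fst, ← congrFun (Emat_mulVec b x) i, hrepr]
    exact hfst.symm
  · rw [phi_apply, phiFun_snd]
    exact congrFun hrepr i

noncomputable def equivKer : M ≃ₗ[Rε] LinearMap.ker (Blin (Emat b)) :=
  LinearEquiv.ofBijective
    ((phi b).codRestrict (LinearMap.ker (Blin (Emat b)))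
      (fun x => LinearMap.mem_ker.mpr (phi_mem_ker b x)))
    ⟨fun x y h => phi_injective b (congrArg Subtype.val h),
     fun w => by
      obtain ⟨x, hx⟩ := phi_surj_ker b w.1 (LinearMap.mem_ker.mp w.2)
      exact ⟨x, Subtype.ext hx⟩⟩

end ModulePart


section Assembly

open DualNumber

lemma RεFiniteZ : Module.Finite ℤ Rε := by
  have hsurj : Function.Surjective (fun p : Fin 2 → ℤ =>
      (TrivSqZeroExt.inl (p 0) + TrivSqZeroExt.inr (p 1) : Rε)) := by
    intro r
    refine ⟨![r.fst, r.snd], ?_⟩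
    refine TrivSqZeroExt.ext ?_ ?_ <;> simp
  have hlin : IsLinearMap ℤ (fun p : Fin 2 → ℤ =>
      (TrivSqZeroExt.inl (p 0) + TrivSqZeroExt.inr (p 1) : Rε)) := by
    constructor
    · intro p q
      refine TrivSqZeroExt.ext ?_ ?_ <;> simp
    · intro c p
      refine TrivSqZeroExt.ext ?_ ?_ <;> simp
  exact Module.Finite.of_surjective (IsLinearMap.mk' _ hlin) hsurj

lemma RεNoTorsion : NoZeroSMulDivisors ℤ Rε := by
  refine ⟨fun {c x} h => ?_⟩
  rcases eq_or_ne c 0 with rfl | hc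
  · exact Or.inl rfl
  · refine Or.inr (TrivSqZeroExt.ext ?_ ?_)
    · have := congrArg TrivSqZeroExt.fst h
      rw [TrivSqZeroExt.fst_smul] at this
      simpa [hc] using this
    · have := congrArg TrivSqZeroExt.snd h
      rw [TrivSqZeroExt.snd_smul] at this
      simpa [hc] using this

end Assembly

/-- Over the ring of dual integers `ℤ[ε] = ℤ[T]/(T²)`, a finitely generated module is
Gorenstein-projective iff it is torsionless, i.e. embeds into a finitely generated free
`ℤ[ε]`-module.  Thus `G-proj ℤ[ε] = sub(ℤ[ε])`. -/
theorem stmt4 (M : Type) [AddCommGroup M] [Module (DualNumber ℤ) M]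
    [Module.Finite (DualNumber ℤ) M] :
    IsGorensteinProjective (DualNumber ℤ) M ↔
      ∃ (n : ℕ) (f : M →ₗ[DualNumber ℤ] (Fin n → DualNumber ℤ)),
        Function.Injective f := by
  constructor
  · rintro ⟨P, d, hfin, hproj, -, -, ⟨e⟩⟩
    haveI := hfin 0
    haveI := hproj 0
    obtain ⟨n, π, hπ⟩ := Module.Finite.exists_fin' (DualNumber ℤ) (P 0)
    obtain ⟨g, hg⟩ := Module.projective_lifting_property π LinearMap.id hπ
    have hginj : Function.Injective g := by
      intro x y hxy
      have hx := LinearMap.congr_fun hg x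
      have hy := LinearMap.congr_fun hg y
      simp only [LinearMap.comp_apply, LinearMap.id_apply] at hx hy
      rw [← hx, ← hy, hxy]
    refine ⟨n, g ∘ₗ ((LinearMap.ker (d 0)).subtype ∘ₗ (e : M →ₗ[DualNumber ℤ] _)), ?_⟩
    rw [LinearMap.coe_comp, LinearMap.coe_comp]
    exact hginj.comp ((Submodule.injective_subtype _).comp e.injective)
  · rintro ⟨n, f, hf⟩
    haveI : Module.Finite ℤ Rε := RεFiniteZ
    haveI : Module.Finite ℤ M := Module.Finite.trans Rε M
    haveI : NoZeroSMulDivisors ℤ Rε := RεNoTorsion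
    haveI : NoZeroSMulDivisors ℤ M :=
      hf.noZeroSMulDivisors f (map_zero f) (fun c x => map_zsmul f c x)
    let b : Module.Basis (Fin (Module.finrank ℤ M)) ℤ M := Module.finBasis ℤ M
    refine ⟨fun _ => ModuleCat.of Rε (Fin (Module.finrank ℤ M) → Rε),
      fun i => if Even i then Blin (Emat b) else Alin (Emat b),
      fun i => ?_, fun i => ?_, fun i => ?_, fun i => ?_, ?_⟩
    · exact inferInstanceAs (Module.Finite Rε (Fin (Module.finrank ℤ M) → Rε))
    · exact inferInstanceAs (Module.Projective Rε (Fin (Module.finrank ℤ M) → Rε))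
    · beta_reduce
      rcases Int.even_or_odd i with he | ho
      · rw [if_pos he, if_neg (fun h => (Int.even_add_one.mp h) he)]
        exact exact_Blin_Alin (Emat b) (Emat_sq b)
      · have hne : ¬ Even i := Int.not_even_iff_odd.mpr ho
        rw [if_neg hne, if_pos (Int.even_add_one.mpr hne)]
        exact exact_Alin_Blin (Emat b) (Emat_sq b)
    · beta_reduce
      rcases Int.even_or_odd i with he | ho
      · rw [if_pos he, if_neg (fun h => (Int.even_add_one.mp h) he)]
        exact exact_dual_AB (Emat b) (Emat_sq b)
      · have hne : ¬ Even i := Int.not_even_iff_odd.mpr ho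
        rw [if_neg hne, if_pos (Int.even_add_one.mpr hne)]
        exact exact_dual_BA (Emat b) (Emat_sq b)
    · have hd0 : (if Even (0 : ℤ) then Blin (Emat b) else Alin (Emat b)) = Blin (Emat b) :=
        if_pos ⟨0, rfl⟩
      exact ⟨(equivKer b).trans (LinearEquiv.ofEq _ _ (by beta_reduce; rw [hd0]))⟩
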